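/- Let t₀ < t_f, ρ > 0, x₀ ∈ ℝ^{n_x}, let U_ad = {v ∈ ℝ^{n_u} : u_a ≤ v ≤ u_b componentwise} for given u_a ≤ u_b, and let 𝗒₁ : [t₀,t_f] × B̄_ρ(x₀) → ℝ^{n_y×n_u}, 𝗒₂ : [t₀,t_f] × B̄_ρ(x₀) → ℝ^{n_y} satisfy: 𝗒₁(t,·), 𝗒₂(t,·) continuous on B̄_ρ(x₀) for a.e. t, and ‖𝗒₁(t,x)‖_F ≤ κ₁(t), ‖𝗒₂(t,x)‖₂ ≤ κ₂(t) for a.e. t and all x ∈ B̄_ρ(x₀) with κ₁, κ₂ ∈ L²(t₀,t_f). Let x_ℓ, x̃ : [t₀,t_f] → B̄_ρ(x₀) be measurable with measurable compositions t ↦ 𝗒_j(t,x_ℓ(t)), t ↦ 𝗒_j(t,x̃(t)) (j = 1,2) and x_ℓ(t) → x̃(t) for a.e. t, and let u_ℓ, ũ ∈ L²(t₀,t_f;ℝ^{n_u}) with u_ℓ(t) ∈ U_ad a.e. and u_ℓ → ũ weakly in L². Then y_ℓ := 𝗒₁(·,x_ℓ(·))u_ℓ(·) + 𝗒₂(·,x_ℓ(·))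 converges weakly in L²(t₀,t_f;ℝ^{n_y}) to ỹ := 𝗒₁(·,x̃(·))ũ(·) + 𝗒₂(·,x̃(·)). -/

import Mathlib

open MeasureTheory Set Filter Metric Topology
open scoped RealInnerProductSpace

/-- Matrix–vector multiplication for Euclidean-space vectors. -/
noncomputable def mulVecE {m n : ℕ} (M : Matrix (Fin m) (Fin n) ℝ)
    (v : EuclideanSpace ℝ (Fin n)) : EuclideanSpace ℝ (Fin m) :=
  (WithLp.equiv 2 (Fin m → ℝ)).symm (M.mulVec ((WithLp.equiv 2 (Fin n → ℝ)) v))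

/-- Frobenius norm of a real matrix. -/
noncomputable def frobNorm {m n : ℕ} (M : Matrix (Fin m) (Fin n) ℝ) : ℝ :=
  Real.sqrt (∑ i, ∑ j, (M i j) ^ 2)

open Matrix

lemma frobNorm_nonneg {m n : ℕ} (M : Matrix (Fin m) (Fin n) ℝ) : 0 ≤ frobNorm M :=
  Real.sqrt_nonneg _

lemma mulVecE_apply {m n : ℕ} (M : Matrix (Fin m) (Fin n) ℝ)
    (v : EuclideanSpace ℝ (Fin n)) (i : Fin m) :
    mulVecE M v i = ∑ j, M i j * v j := rfl

lemma norm_mulVecE_le {m n : ℕ} (M : Matrix (Fin m) (Fin n) ℝ)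
    (v : EuclideanSpace ℝ (Fin n)) :
    ‖mulVecE M v‖ ≤ frobNorm M * ‖v‖ := by
  have h1 : ‖mulVecE M v‖ = Real.sqrt (∑ i, (∑ j, M i j * v j) ^ 2) := by
    rw [EuclideanSpace.norm_eq]
    congr 1
    refine Finset.sum_congr rfl fun i _ => ?_
    rw [mulVecE_apply, Real.norm_eq_abs, sq_abs]
  rw [h1, frobNorm, EuclideanSpace.norm_eq, ← Real.sqrt_mul (by positivity)]
  apply Real.sqrt_le_sqrt
  calc ∑ i, (∑ j, M i j * v j) ^ 2
      ≤ ∑ i, (∑ j, (M i j)^2) * (∑ j, (v j)^2) :=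
        Finset.sum_le_sum fun i _ => Finset.sum_mul_sq_le_sq_mul_sq _ _ _
    _ = (∑ i, ∑ j, (M i j)^2) * ∑ j, ‖v j‖^2 := by
        rw [← Finset.sum_mul]; congr 1
        exact Finset.sum_congr rfl fun j _ => by rw [Real.norm_eq_abs, sq_abs]

lemma inner_mulVecE {m n : ℕ} (M : Matrix (Fin m) (Fin n) ℝ)
    (u : EuclideanSpace ℝ (Fin n)) (w : EuclideanSpace ℝ (Fin m)) :
    ⟪mulVecE M u, w⟫ = ⟪u, mulVecE Mᵀ w⟫ := by
  simp only [PiLp.inner_apply, RCLike.inner_apply, conj_trivial, mulVecE_apply,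
    Matrix.transpose_apply]
  simp only [Finset.sum_mul, Finset.mul_sum]
  rw [Finset.sum_comm]
  exact Finset.sum_congr rfl fun j _ => Finset.sum_congr rfl fun i _ => by ring

lemma frobNorm_transpose {m n : ℕ} (M : Matrix (Fin m) (Fin n) ℝ) :
    frobNorm Mᵀ = frobNorm M := by
  unfold frobNorm
  rw [Finset.sum_comm]
  rfl

lemma frobNorm_sub_le {m n : ℕ} (A B : Matrix (Fin m) (Fin n) ℝ) :
    frobNorm (A - B) ≤ frobNorm A + frobNorm B := by
  have key : ∀ C : Matrix (Fin m) (Fin n) ℝ,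
      frobNorm C = ‖((WithLp.equiv 2 (Fin m × Fin n → ℝ)).symm
        (fun p => C p.1 p.2) : EuclideanSpace ℝ (Fin m × Fin n))‖ := by
    intro C
    rw [EuclideanSpace.norm_eq, frobNorm]
    congr 1
    rw [Fintype.sum_prod_type]
    exact Finset.sum_congr rfl fun i _ => Finset.sum_congr rfl fun j _ => by
      rw [Real.norm_eq_abs, sq_abs]; rfl
  rw [key, key, key]
  have : ((WithLp.equiv 2 (Fin m × Fin n → ℝ)).symm (fun p => (A - B) p.1 p.2)
      : EuclideanSpace ℝ (Fin m × Fin n)) =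
      (WithLp.equiv 2 (Fin m × Fin n → ℝ)).symm (fun p => A p.1 p.2) -
      (WithLp.equiv 2 (Fin m × Fin n → ℝ)).symm (fun p => B p.1 p.2) := rfl
  rw [this]
  exact norm_sub_le _ _

lemma continuous_frobNorm {m n : ℕ} :
    Continuous (fun M : Matrix (Fin m) (Fin n) ℝ => frobNorm M) := by
  unfold frobNorm
  apply Real.continuous_sqrt.comp
  exact continuous_finset_sum _ fun i _ => continuous_finset_sum _ fun j _ =>
    (continuous_id.matrix_elem i j).pow 2

lemma continuous_mulVecE {m n : ℕ} :
    Continuous (fun p : Matrix (Fin m) (Fin n) ℝ × EuclideanSpace ℝ (Fin n) =>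
      mulVecE p.1 p.2) := by
  unfold mulVecE
  refine Continuous.comp (PiLp.continuous_toLp 2 (fun _ : Fin m => ℝ)) ?_
  apply continuous_pi
  intro i
  show Continuous fun p : Matrix (Fin m) (Fin n) ℝ × EuclideanSpace ℝ (Fin n) =>
    ∑ j, p.1 i j * p.2 j
  exact continuous_finset_sum _ fun j _ =>
    ((continuous_fst.matrix_elem i j).mul
      (((continuous_apply j).comp (PiLp.continuous_ofLp 2 (fun _ : Fin n => ℝ))).comp
        continuous_snd))

lemma integrable_mul_L2 {μ : Measure ℝ} {f g : ℝ → ℝ}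
    (hf : MemLp f 2 μ) (hg : MemLp g 2 μ) :
    Integrable (fun t => f t * g t) μ := by
  have h : MemLp (f • g) 1 μ := MemLp.smul (𝕜 := ℝ) (r := 1) hg hf (hpqr := ⟨by rw [inv_one]; exact ENNReal.inv_two_add_inv_two⟩)
  exact memLp_one_iff_integrable.mp h

lemma ae_nonpos_of_weak_test {μ : Measure ℝ} (g : ℝ → ℝ) (hg : MemLp g 2 μ)
    (H : ∀ φ : ℝ → ℝ, MemLp φ 2 μ → (∀ t, 0 ≤ φ t) → ∫ t, g t * φ t ∂μ ≤ 0) :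
    ∀ᵐ t ∂μ, g t ≤ 0 := by
  set φ : ℝ → ℝ := fun t => max (g t) 0 with hφdef
  have hφm : AEStronglyMeasurable φ μ := hg.1.sup aestronglyMeasurable_const
  have hφ2 : MemLp φ 2 μ := by
    refine hg.mono hφm (Eventually.of_forall fun t => ?_)
    simp only [hφdef, Real.norm_eq_abs]
    rw [abs_of_nonneg (le_max_right _ _)]
    exact max_le (le_abs_self _) (abs_nonneg _)
  have hsq : ∀ t, g t * φ t = φ t ^ 2 := by
    intro t
    rcases le_total (g t) 0 with h | h
    · simp [hφdef, max_eq_right h]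
    · simp [hφdef, max_eq_left h, sq]
  have h0 : ∫ t, φ t ^ 2 ∂μ ≤ 0 := by
    rw [show (fun t => φ t ^ 2) = fun t => g t * φ t from funext fun t => (hsq t).symm]
    exact H φ hφ2 fun t => le_max_right _ _
  have hint : Integrable (fun t => φ t ^ 2) μ := hφ2.integrable_sq
  have h00 : ∫ t, φ t ^ 2 ∂μ = 0 :=
    le_antisymm h0 (integral_nonneg fun t => sq_nonneg _)
  have := (integral_eq_zero_iff_of_nonneg (fun t => sq_nonneg (φ t)) hint).mp h00
  filter_upwards [this] with t ht
  have hφ0 : φ t ^ 2 = 0 := by simpa using ht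
  have : φ t = 0 := by
    have h2 := sq_abs (φ t)
    nlinarith [abs_nonneg (φ t), sq_nonneg (φ t)]
  calc g t ≤ max (g t) 0 := le_max_left _ _
    _ = 0 := this

lemma norm_le_box {n : ℕ} (ua ub u : EuclideanSpace ℝ (Fin n))
    (h : ∀ i, ua i ≤ u i ∧ u i ≤ ub i) : ‖u‖ ≤ ‖ua‖ + ‖ub‖ := by
  have habs : ∀ (x : EuclideanSpace ℝ (Fin n)),
      ‖((WithLp.equiv 2 (Fin n → ℝ)).symm (fun i => |x i|) : EuclideanSpace ℝ (Fin n))‖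
        = ‖x‖ := by
    intro x
    rw [EuclideanSpace.norm_eq, EuclideanSpace.norm_eq]
    congr 1
    refine Finset.sum_congr rfl fun i _ => ?_
    simp [Real.norm_eq_abs, abs_abs]
  set a' : EuclideanSpace ℝ (Fin n) := (WithLp.equiv 2 (Fin n → ℝ)).symm (fun i => |ua i|)
  set b' : EuclideanSpace ℝ (Fin n) := (WithLp.equiv 2 (Fin n → ℝ)).symm (fun i => |ub i|)
  have h1 : ‖u‖ ≤ ‖a' + b'‖ := by
    rw [EuclideanSpace.norm_eq, EuclideanSpace.norm_eq]
    apply Real.sqrt_le_sqrt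
    refine Finset.sum_le_sum fun i _ => ?_
    have hui : |u i| ≤ |ua i| + |ub i| := by
      rcases le_total 0 (u i) with hs | hs
      · rw [abs_of_nonneg hs]
        calc u i ≤ ub i := (h i).2
          _ ≤ |ub i| := le_abs_self _
          _ ≤ |ua i| + |ub i| := le_add_of_nonneg_left (abs_nonneg _)
      · rw [abs_of_nonpos hs]
        calc -u i ≤ -ua i := neg_le_neg (h i).1
          _ ≤ |ua i| := neg_le_abs _
          _ ≤ |ua i| + |ub i| := le_add_of_nonneg_right (abs_nonneg _)
    have hab : (a' + b') i = |ua i| + |ub i| := rfl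
    rw [Real.norm_eq_abs, Real.norm_eq_abs, sq_abs, sq_abs, hab]
    calc (u i) ^ 2 = |u i| ^ 2 := (sq_abs _).symm
      _ ≤ (|ua i| + |ub i|) ^ 2 := by
          apply pow_le_pow_left₀ (abs_nonneg _) hui
  calc ‖u‖ ≤ ‖a' + b'‖ := h1
    _ ≤ ‖a'‖ + ‖b'‖ := norm_add_le _ _
    _ = ‖ua‖ + ‖ub‖ := by rw [habs ua, habs ub]

lemma inner_aesm {n : ℕ} {μ : Measure ℝ} {f g : ℝ → EuclideanSpace ℝ (Fin n)}
    (hf : AEStronglyMeasurable f μ) (hg : AEStronglyMeasurable g μ) :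
    AEStronglyMeasurable (fun t => (⟪f t, g t⟫ : ℝ)) μ :=
  continuous_inner.comp_aestronglyMeasurable (hf.prodMk hg)

lemma weak_conv_L1 {n : ℕ} {μ : Measure ℝ} [IsFiniteMeasure μ]
    {ul : ℕ → ℝ → EuclideanSpace ℝ (Fin n)} {ut : ℝ → EuclideanSpace ℝ (Fin n)}
    {M : ℝ} (hM : 0 ≤ M)
    (hul : ∀ ℓ, AEStronglyMeasurable (ul ℓ) μ) (hut : AEStronglyMeasurable ut μ)
    (hulM : ∀ ℓ, ∀ᵐ t ∂μ, ‖ul ℓ t‖ ≤ M) (hutM : ∀ᵐ t ∂μ, ‖ut t‖ ≤ M)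
    (hweak : ∀ v : ℝ → EuclideanSpace ℝ (Fin n), MemLp v 2 μ →
      Tendsto (fun ℓ => ∫ t, ⟪ul ℓ t, v t⟫ ∂μ) atTop (𝓝 (∫ t, ⟪ut t, v t⟫ ∂μ)))
    {v : ℝ → EuclideanSpace ℝ (Fin n)} (hv : AEStronglyMeasurable v μ)
    {g : ℝ → ℝ} (hg : Integrable g μ) (hvg : ∀ᵐ t ∂μ, ‖v t‖ ≤ g t) :
    Tendsto (fun ℓ => ∫ t, ⟪ul ℓ t, v t⟫ ∂μ) atTop (𝓝 (∫ t, ⟪ut t, v t⟫ ∂μ)) := by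
  -- measurable representative of g
  set g' : ℝ → ℝ := hg.1.mk g with hg'def
  have hg'm : StronglyMeasurable g' := hg.1.stronglyMeasurable_mk
  have hgg' : g =ᵐ[μ] g' := hg.1.ae_eq_mk
  have hg'int : Integrable g' μ := hg.congr hgg'
  have hvg' : ∀ᵐ t ∂μ, ‖v t‖ ≤ g' t := by
    filter_upwards [hvg, hgg'] with t h1 h2; rw [← h2]; exact h1
  -- truncations
  set S : ℕ → Set ℝ := fun N => {t | (N : ℝ) < g' t} with hSdef
  have hSmeas : ∀ N, MeasurableSet (S N) :=
    fun N => measurableSet_lt measurable_const hg'm.measurable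
  set vN : ℕ → ℝ → EuclideanSpace ℝ (Fin n) := fun N => (S N)ᶜ.indicator v with hvNdef
  set tail : ℕ → ℝ → ℝ := fun N => (S N).indicator g' with htaildef
  have htail_nonneg : ∀ N t, 0 ≤ tail N t := by
    intro N t
    by_cases h : t ∈ S N
    · simp only [htaildef, indicator_of_mem h]
      exact le_trans (Nat.cast_nonneg N) (le_of_lt h)
    · simp [htaildef, indicator_of_notMem h]
  have htail_int : ∀ N, Integrable (tail N) μ := fun N => hg'int.indicator (hSmeas N)
  have hvN2 : ∀ N, MemLp (vN N) 2 μ := by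
    intro N
    have hm : AEStronglyMeasurable (vN N) μ := hv.indicator (hSmeas N).compl
    have hbd : ∀ᵐ t ∂μ, ‖vN N t‖ ≤ (N : ℝ) := by
      filter_upwards [hvg'] with t h1
      by_cases h : t ∈ (S N)ᶜ
      · simp only [hvNdef, indicator_of_mem h]
        exact le_trans h1 (not_lt.mp h)
      · simp [hvNdef, indicator_of_notMem h]
    exact (memLp_top_of_bound hm _ hbd).mono_exponent le_top
  -- the difference bound
  have hdiff : ∀ (u : ℝ → EuclideanSpace ℝ (Fin n)), AEStronglyMeasurable u μ →
      (∀ᵐ t ∂μ, ‖u t‖ ≤ M) → ∀ N,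
      |(∫ t, ⟪u t, v t⟫ ∂μ) - ∫ t, ⟪u t, vN N t⟫ ∂μ| ≤ M * ∫ t, tail N t ∂μ := by
    intro u hum huM N
    have hint1 : Integrable (fun t => (⟪u t, v t⟫ : ℝ)) μ := by
      refine Integrable.mono' (hg'int.const_mul M) (inner_aesm hum hv) ?_
      filter_upwards [huM, hvg'] with t h1 h2
      calc ‖(⟪u t, v t⟫ : ℝ)‖ ≤ ‖u t‖ * ‖v t‖ := norm_inner_le_norm _ _
        _ ≤ M * g' t := by
            apply mul_le_mul h1 h2 (norm_nonneg _) hM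
    have hint2 : Integrable (fun t => (⟪u t, vN N t⟫ : ℝ)) μ := by
      refine Integrable.mono' (hg'int.const_mul M) (inner_aesm hum (hv.indicator (hSmeas N).compl)) ?_
      filter_upwards [huM, hvg'] with t h1 h2
      calc ‖(⟪u t, vN N t⟫ : ℝ)‖ ≤ ‖u t‖ * ‖vN N t‖ := norm_inner_le_norm _ _
        _ ≤ M * g' t := by
            apply mul_le_mul h1 ?_ (norm_nonneg _) hM
            by_cases h : t ∈ (S N)ᶜ
            · simp only [hvNdef, indicator_of_mem h]; exact h2
            · simp only [hvNdef, indicator_of_notMem h, norm_zero]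
              exact le_trans (norm_nonneg (v t)) h2
    rw [← integral_sub hint1 hint2, ← Real.norm_eq_abs, ← integral_const_mul]
    refine norm_integral_le_of_norm_le ((htail_int N).const_mul M) ?_
    filter_upwards [huM, hvg'] with t h1 h2
    have : (⟪u t, v t⟫ : ℝ) - ⟪u t, vN N t⟫ = ⟪u t, v t - vN N t⟫ := (inner_sub_right _ _ _).symm
    rw [this]
    by_cases h : t ∈ S N
    · have hv' : v t - vN N t = v t := by
        simp [hvNdef, indicator_of_notMem (by simpa using h : t ∉ (S N)ᶜ)]
      rw [hv', htaildef]
      simp only [indicator_of_mem h]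
      calc ‖(⟪u t, v t⟫ : ℝ)‖ ≤ ‖u t‖ * ‖v t‖ := norm_inner_le_norm _ _
        _ ≤ M * g' t := mul_le_mul h1 h2 (norm_nonneg _) hM
    · have hv' : v t - vN N t = 0 := by
        simp [hvNdef, indicator_of_mem (by simpa using h : t ∈ (S N)ᶜ)]
      rw [hv', htaildef]
      simp [indicator_of_notMem h]
  -- tail integral tends to 0
  have htail0 : Tendsto (fun N => ∫ t, tail N t ∂μ) atTop (𝓝 0) := by
    have := tendsto_integral_of_dominated_convergence (μ := μ)
      (F := fun N => tail N) (f := fun _ => 0) (bound := fun t => |g' t|)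
      (fun N => (hg'm.indicator (hSmeas N)).aestronglyMeasurable)
      hg'int.abs
      (fun N => Eventually.of_forall fun t => by
        by_cases h : t ∈ S N
        · simp only [htaildef, indicator_of_mem h, Real.norm_eq_abs]; exact le_refl _
        · simp [htaildef, indicator_of_notMem h])
      (Eventually.of_forall fun t => by
        obtain ⟨N₀, hN₀⟩ := exists_nat_ge (g' t)
        refine tendsto_const_nhds.congr' ?_
        filter_upwards [eventually_ge_atTop N₀] with N hN
        have : t ∉ S N := by
          simp only [hSdef, mem_setOf_eq, not_lt]
          exact le_trans hN₀ (by exact_mod_cast hN)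
        simp [htaildef, indicator_of_notMem this])
    simpa using this
  -- main ε/3 argument
  rw [Metric.tendsto_atTop]
  intro ε hε
  have hδpos : 0 < ε / (3 * (M + 1)) := by positivity
  obtain ⟨N, hN⟩ : ∃ N, ∫ t, tail N t ∂μ < ε / (3 * (M + 1)) :=
    ((htail0.eventually (gt_mem_nhds hδpos)).exists)
  have htail_le : M * ∫ t, tail N t ∂μ < ε / 3 := by
    have h1 : M * ∫ t, tail N t ∂μ ≤ M * (ε / (3 * (M + 1))) := by
      apply mul_le_mul_of_nonneg_left (le_of_lt hN) hM
    have h2 : M * (ε / (3 * (M + 1))) < ε / 3 := by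
      have heq : M * (ε / (3 * (M + 1))) = (M * ε) / (3 * (M + 1)) := by ring
      rw [heq, div_lt_div_iff₀ (by positivity) (by norm_num : (0:ℝ) < 3)]
      nlinarith
    linarith
  obtain ⟨L, hL⟩ := Metric.tendsto_atTop.mp (hweak (vN N) (hvN2 N)) (ε / 3) (by positivity)
  refine ⟨L, fun ℓ hℓ => ?_⟩
  rw [Real.dist_eq]
  have e1 := hdiff (ul ℓ) (hul ℓ) (hulM ℓ) N
  have e2 := hdiff ut hut hutM N
  have e3 : |(∫ t, ⟪ul ℓ t, vN N t⟫ ∂μ) - ∫ t, ⟪ut t, vN N t⟫ ∂μ| < ε / 3 := by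
    have := hL ℓ hℓ
    rwa [Real.dist_eq] at this
  calc |(∫ t, ⟪ul ℓ t, v t⟫ ∂μ) - ∫ t, ⟪ut t, v t⟫ ∂μ|
      ≤ |(∫ t, ⟪ul ℓ t, v t⟫ ∂μ) - ∫ t, ⟪ul ℓ t, vN N t⟫ ∂μ|
        + |(∫ t, ⟪ul ℓ t, vN N t⟫ ∂μ) - ∫ t, ⟪ut t, vN N t⟫ ∂μ|
        + |(∫ t, ⟪ut t, vN N t⟫ ∂μ) - ∫ t, ⟪ut t, v t⟫ ∂μ| := by
        have := abs_sub_le (∫ t, ⟪ul ℓ t, v t⟫ ∂μ) (∫ t, ⟪ul ℓ t, vN N t⟫ ∂μ)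
          (∫ t, ⟪ut t, v t⟫ ∂μ)
        have h2 := abs_sub_le (∫ t, ⟪ul ℓ t, vN N t⟫ ∂μ) (∫ t, ⟪ut t, vN N t⟫ ∂μ)
          (∫ t, ⟪ut t, v t⟫ ∂μ)
        linarith
    _ < ε / 3 + ε / 3 + ε / 3 := by
        have e2' : |(∫ t, ⟪ut t, vN N t⟫ ∂μ) - ∫ t, ⟪ut t, v t⟫ ∂μ| ≤ M * ∫ t, tail N t ∂μ := by
          rw [abs_sub_comm]; exact e2
        have h1 : |(∫ t, ⟪ul ℓ t, v t⟫ ∂μ) - ∫ t, ⟪ul ℓ t, vN N t⟫ ∂μ| < ε / 3 :=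
          lt_of_le_of_lt e1 htail_le
        have h3 : |(∫ t, ⟪ut t, vN N t⟫ ∂μ) - ∫ t, ⟪ut t, v t⟫ ∂μ| < ε / 3 :=
          lt_of_le_of_lt e2' htail_le
        linarith
    _ = ε := by ring
lemma frobNorm_zero {m n : ℕ} : frobNorm (0 : Matrix (Fin m) (Fin n) ℝ) = 0 := by
  simp [frobNorm]

set_option maxHeartbeats 1000000 in
lemma integrable_inner_mulVec {ny nu : ℕ} {μ : Measure ℝ}
    {A : ℝ → Matrix (Fin ny) (Fin nu) ℝ}
    {u : ℝ → EuclideanSpace ℝ (Fin nu)} {w : ℝ → EuclideanSpace ℝ (Fin ny)}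
    {c : ℝ → ℝ} {M : ℝ}
    (hA : AEStronglyMeasurable A μ) (hu : AEStronglyMeasurable u μ)
    (hw : AEStronglyMeasurable w μ)
    (hbd : ∀ᵐ t ∂μ, frobNorm (A t) ≤ c t) (huM : ∀ᵐ t ∂μ, ‖u t‖ ≤ M)
    (hint : Integrable (fun t => c t * ‖w t‖) μ) :
    Integrable (fun t => (⟪mulVecE (A t) (u t), w t⟫ : ℝ)) μ := by
  refine Integrable.mono' (hint.const_mul M)
    (inner_aesm (continuous_mulVecE.comp_aestronglyMeasurable (hA.prodMk hu)) hw) ?_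
  filter_upwards [hbd, huM] with t h1 h2
  have h0 : (0:ℝ) ≤ c t := (frobNorm_nonneg _).trans h1
  have h3 : ‖mulVecE (A t) (u t)‖ ≤ c t * M :=
    (norm_mulVecE_le _ _).trans (mul_le_mul h1 h2 (norm_nonneg _) h0)
  calc ‖(⟪mulVecE (A t) (u t), w t⟫ : ℝ)‖
      ≤ ‖mulVecE (A t) (u t)‖ * ‖w t‖ := norm_inner_le_norm _ _
    _ ≤ (c t * M) * ‖w t‖ := mul_le_mul_of_nonneg_right h3 (norm_nonneg _)
    _ = M * (c t * ‖w t‖) := by ring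


set_option maxHeartbeats 2000000 in
/-- weak `L²` convergence of the algebraic variables
`y_ℓ = 𝗒₁(·,x_ℓ)u_ℓ + 𝗒₂(·,x_ℓ)` to `ỹ = 𝗒₁(·,x̃)ũ + 𝗒₂(·,x̃)`. -/
theorem stmt11
    (nx ny nu : ℕ) (t0 tf ρ : ℝ) (ht : t0 < tf) (hρ : 0 < ρ)
    (x0 : EuclideanSpace ℝ (Fin nx))
    (ua ub : EuclideanSpace ℝ (Fin nu)) (hab : ∀ i, ua i ≤ ub i)
    (Uad : Set (EuclideanSpace ℝ (Fin nu)))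
    (hUad : Uad = {v | ∀ i, ua i ≤ v i ∧ v i ≤ ub i})
    (y1 : ℝ → EuclideanSpace ℝ (Fin nx) → Matrix (Fin ny) (Fin nu) ℝ)
    (y2 : ℝ → EuclideanSpace ℝ (Fin nx) → EuclideanSpace ℝ (Fin ny))
    (κ1 κ2 : ℝ → ℝ)
    (hκ1 : MemLp κ1 2 (volume.restrict (Ioc t0 tf)))
    (hκ2 : MemLp κ2 2 (volume.restrict (Ioc t0 tf)))
    -- continuity of `𝗒₁(t,·), 𝗒₂(t,·)` on the closed ball
    (hy1cont : ∀ᵐ t ∂(volume.restrict (Ioc t0 tf)),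
      ContinuousOn (fun x => y1 t x) (closedBall x0 ρ))
    (hy2cont : ∀ᵐ t ∂(volume.restrict (Ioc t0 tf)),
      ContinuousOn (fun x => y2 t x) (closedBall x0 ρ))
    -- `L²` bounds on the closed ball
    (hy1bd : ∀ᵐ t ∂(volume.restrict (Ioc t0 tf)), ∀ x ∈ closedBall x0 ρ,
      frobNorm (y1 t x) ≤ κ1 t)
    (hy2bd : ∀ᵐ t ∂(volume.restrict (Ioc t0 tf)), ∀ x ∈ closedBall x0 ρ,
      ‖y2 t x‖ ≤ κ2 t)
    (xl : ℕ → ℝ → EuclideanSpace ℝ (Fin nx)) (xt : ℝ → EuclideanSpace ℝ (Fin nx))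
    (hxlmem : ∀ ℓ, ∀ t, xl ℓ t ∈ closedBall x0 ρ)
    (hxtmem : ∀ t, xt t ∈ closedBall x0 ρ)
    (hxlmeas : ∀ ℓ, Measurable (xl ℓ)) (hxtmeas : Measurable xt)
    (hcomp1 : ∀ ℓ,
      AEStronglyMeasurable (fun t => y1 t (xl ℓ t)) (volume.restrict (Ioc t0 tf)))
    (hcomp2 : ∀ ℓ,
      AEStronglyMeasurable (fun t => y2 t (xl ℓ t)) (volume.restrict (Ioc t0 tf)))
    (hcomp1' : AEStronglyMeasurable (fun t => y1 t (xt t)) (volume.restrict (Ioc t0 tf)))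
    (hcomp2' : AEStronglyMeasurable (fun t => y2 t (xt t)) (volume.restrict (Ioc t0 tf)))
    -- `x_ℓ(t) → x̃(t)` a.e.
    (hxconv : ∀ᵐ t ∂(volume.restrict (Ioc t0 tf)),
      Tendsto (fun ℓ => xl ℓ t) atTop (𝓝 (xt t)))
    (ul : ℕ → ℝ → EuclideanSpace ℝ (Fin nu)) (ut : ℝ → EuclideanSpace ℝ (Fin nu))
    (hul : ∀ ℓ, MemLp (ul ℓ) 2 (volume.restrict (Ioc t0 tf)))
    (hut : MemLp ut 2 (volume.restrict (Ioc t0 tf)))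
    (huladm : ∀ ℓ, ∀ᵐ t ∂(volume.restrict (Ioc t0 tf)), ul ℓ t ∈ Uad)
    -- `u_ℓ ⇀ ũ` weakly in `L²`
    (huweak : ∀ v : ℝ → EuclideanSpace ℝ (Fin nu),
      MemLp v 2 (volume.restrict (Ioc t0 tf)) →
      Tendsto (fun ℓ => ∫ t, ⟪ul ℓ t, v t⟫ ∂(volume.restrict (Ioc t0 tf))) atTop
        (𝓝 (∫ t, ⟪ut t, v t⟫ ∂(volume.restrict (Ioc t0 tf))))) :
    -- conclusion: `y_ℓ ⇀ ỹ` weakly in `L²(t₀,t_f;ℝ^{n_y})`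
    ∀ w : ℝ → EuclideanSpace ℝ (Fin ny),
      MemLp w 2 (volume.restrict (Ioc t0 tf)) →
      Tendsto (fun ℓ => ∫ t,
          ⟪mulVecE (y1 t (xl ℓ t)) (ul ℓ t) + y2 t (xl ℓ t), w t⟫
          ∂(volume.restrict (Ioc t0 tf))) atTop
        (𝓝 (∫ t, ⟪mulVecE (y1 t (xt t)) (ut t) + y2 t (xt t), w t⟫
          ∂(volume.restrict (Ioc t0 tf)))) := by
  intro w hw
  set μ : Measure ℝ := volume.restrict (Ioc t0 tf) with hμdef
  haveI : IsFiniteMeasure μ := by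
    constructor
    rw [hμdef, Measure.restrict_apply_univ, Real.volume_Ioc]
    exact ENNReal.ofReal_lt_top
  set M : ℝ := ‖ua‖ + ‖ub‖ with hMdef
  have hM0 : 0 ≤ M := by positivity
  have hboxnorm : ∀ u : EuclideanSpace ℝ (Fin nu), u ∈ Uad → ‖u‖ ≤ M := by
    intro u hu; rw [hUad] at hu; exact norm_le_box ua ub u hu
  have hulM : ∀ ℓ, ∀ᵐ t ∂μ, ‖ul ℓ t‖ ≤ M :=
    fun ℓ => (huladm ℓ).mono fun t ht' => hboxnorm _ ht'
  -- `ut t ∈ Uad` a.e.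
  have hutcoord : ∀ i : Fin nu, MemLp (fun t => ut t i) 2 μ := fun i =>
    (EuclideanSpace.proj i : EuclideanSpace ℝ (Fin nu) →L[ℝ] ℝ).comp_memLp' hut
  have hulcoord : ∀ ℓ (i : Fin nu), MemLp (fun t => ul ℓ t i) 2 μ := fun ℓ i =>
    (EuclideanSpace.proj i : EuclideanSpace ℝ (Fin nu) →L[ℝ] ℝ).comp_memLp' (hul ℓ)
  have keybox : ∀ i : Fin nu, ∀ᵐ t ∂μ, ua i ≤ ut t i ∧ ut t i ≤ ub i := by
    intro i
    have inner_id : ∀ (φ : ℝ → ℝ) (u : EuclideanSpace ℝ (Fin nu)) (t : ℝ),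
        (⟪u, φ t • EuclideanSpace.single i (1:ℝ)⟫ : ℝ) = φ t * u i := by
      intro φ u t
      rw [real_inner_smul_right, EuclideanSpace.inner_single_right]
      simp
    have tendsto_coord : ∀ (φ : ℝ → ℝ), MemLp φ 2 μ →
        Tendsto (fun ℓ => ∫ t, φ t * ul ℓ t i ∂μ) atTop (𝓝 (∫ t, φ t * ut t i ∂μ)) := by
      intro φ hφ
      have hv2 : MemLp (fun t => φ t • EuclideanSpace.single i (1:ℝ)) 2 μ := by
        have := MemLp.smul (q := ⊤) (p := 2) (r := 2)
          (f := fun _ : ℝ => EuclideanSpace.single i (1:ℝ)) (φ := φ)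
          (memLp_const _) hφ
        exact this
      have hT := huweak _ hv2
      simp only [inner_id] at hT
      exact hT
    have hub' : ∀ᵐ t ∂μ, ut t i - ub i ≤ 0 := by
      apply ae_nonpos_of_weak_test (fun t => ut t i - ub i)
        ((hutcoord i).sub (memLp_const _))
      intro φ hφ hφ0
      have hT := tendsto_coord φ hφ
      have hle : ∀ ℓ, ∫ t, φ t * ul ℓ t i ∂μ ≤ ∫ t, φ t * ub i ∂μ := by
        intro ℓ
        apply integral_mono_ae (integrable_mul_L2 hφ (hulcoord ℓ i))
          (integrable_mul_L2 hφ (memLp_const _))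
        filter_upwards [huladm ℓ] with t ht'
        have hcoord : ul ℓ t i ≤ ub i := by rw [hUad] at ht'; exact (ht' i).2
        exact mul_le_mul_of_nonneg_left hcoord (hφ0 t)
      have hlim : ∫ t, φ t * ut t i ∂μ ≤ ∫ t, φ t * ub i ∂μ :=
        le_of_tendsto hT (Eventually.of_forall hle)
      have hsub : ∫ t, (ut t i - ub i) * φ t ∂μ
          = (∫ t, φ t * ut t i ∂μ) - ∫ t, φ t * ub i ∂μ := by
        rw [← integral_sub (integrable_mul_L2 hφ (hutcoord i))
          (integrable_mul_L2 hφ (memLp_const _))]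
        exact integral_congr_ae (Eventually.of_forall fun t => by ring)
      rw [hsub]; linarith
    have hua' : ∀ᵐ t ∂μ, ua i - ut t i ≤ 0 := by
      apply ae_nonpos_of_weak_test (fun t => ua i - ut t i)
        ((memLp_const _).sub (hutcoord i))
      intro φ hφ hφ0
      have hT := tendsto_coord φ hφ
      have hle : ∀ ℓ, ∫ t, φ t * ua i ∂μ ≤ ∫ t, φ t * ul ℓ t i ∂μ := by
        intro ℓ
        apply integral_mono_ae (integrable_mul_L2 hφ (memLp_const _))
          (integrable_mul_L2 hφ (hulcoord ℓ i))
        filter_upwards [huladm ℓ] with t ht'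
        have hcoord : ua i ≤ ul ℓ t i := by rw [hUad] at ht'; exact (ht' i).1
        exact mul_le_mul_of_nonneg_left hcoord (hφ0 t)
      have hlim : ∫ t, φ t * ua i ∂μ ≤ ∫ t, φ t * ut t i ∂μ :=
        ge_of_tendsto hT (Eventually.of_forall hle)
      have hsub : ∫ t, (ua i - ut t i) * φ t ∂μ
          = (∫ t, φ t * ua i ∂μ) - ∫ t, φ t * ut t i ∂μ := by
        rw [← integral_sub (integrable_mul_L2 hφ (memLp_const _))
          (integrable_mul_L2 hφ (hutcoord i))]
        exact integral_congr_ae (Eventually.of_forall fun t => by ring)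
      rw [hsub]; linarith
    filter_upwards [hub', hua'] with t h1 h2
    constructor <;> linarith
  have hutbox : ∀ᵐ t ∂μ, ut t ∈ Uad := by
    rw [hUad]
    have := (ae_all_iff).mpr keybox
    filter_upwards [this] with t ht'
    exact ht'
  have hutM : ∀ᵐ t ∂μ, ‖ut t‖ ≤ M := hutbox.mono fun t ht' => hboxnorm _ ht'
  -- integrable products
  have hwn : MemLp (fun t => ‖w t‖) 2 μ := hw.norm
  have hκ1w : Integrable (fun t => κ1 t * ‖w t‖) μ := integrable_mul_L2 hκ1 hwn
  have hκ2w : Integrable (fun t => κ2 t * ‖w t‖) μ := integrable_mul_L2 hκ2 hwn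
  have hκ1w2 : Integrable (fun t => (2 * κ1 t) * ‖w t‖) μ := by
    have := hκ1w.const_mul 2
    simpa [mul_assoc] using this
  -- the test function v
  set v : ℝ → EuclideanSpace ℝ (Fin nu) := fun t => mulVecE (y1 t (xt t))ᵀ (w t) with hvdef
  have hAt_m : AEStronglyMeasurable (fun t => (y1 t (xt t))ᵀ) μ :=
    (continuous_id.matrix_transpose).comp_aestronglyMeasurable hcomp1'
  have hv_m : AEStronglyMeasurable v μ :=
    continuous_mulVecE.comp_aestronglyMeasurable (hAt_m.prodMk hw.1)
  have hvbd : ∀ᵐ t ∂μ, ‖v t‖ ≤ κ1 t * ‖w t‖ := by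
    filter_upwards [hy1bd] with t hb
    calc ‖v t‖ ≤ frobNorm (y1 t (xt t))ᵀ * ‖w t‖ := norm_mulVecE_le _ _
      _ = frobNorm (y1 t (xt t)) * ‖w t‖ := by rw [frobNorm_transpose]
      _ ≤ κ1 t * ‖w t‖ :=
          mul_le_mul_of_nonneg_right (hb _ (hxtmem t)) (norm_nonneg _)
  have T2 : Tendsto (fun ℓ => ∫ t, ⟪ul ℓ t, v t⟫ ∂μ) atTop
      (𝓝 (∫ t, ⟪ut t, v t⟫ ∂μ)) :=
    weak_conv_L1 hM0 (fun ℓ => (hul ℓ).1) hut.1 hulM hutM huweak hv_m hκ1w hvbd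
  -- difference matrices
  have hΔm : ∀ ℓ, AEStronglyMeasurable (fun t => y1 t (xl ℓ t) - y1 t (xt t)) μ :=
    fun ℓ => (hcomp1 ℓ).sub hcomp1'
  have hΔbd : ∀ ℓ, ∀ᵐ t ∂μ, frobNorm (y1 t (xl ℓ t) - y1 t (xt t)) ≤ 2 * κ1 t := by
    intro ℓ; filter_upwards [hy1bd] with t hb
    calc frobNorm (y1 t (xl ℓ t) - y1 t (xt t))
        ≤ frobNorm (y1 t (xl ℓ t)) + frobNorm (y1 t (xt t)) := frobNorm_sub_le _ _
      _ ≤ κ1 t + κ1 t := add_le_add (hb _ (hxlmem ℓ t)) (hb _ (hxtmem t))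
      _ = 2 * κ1 t := by ring
  have hy1bd' : ∀ᵐ t ∂μ, frobNorm (y1 t (xt t)) ≤ κ1 t :=
    hy1bd.mono fun t hb => hb _ (hxtmem t)
  -- integrabilities
  have i1 : ∀ ℓ, Integrable
      (fun t => (⟪mulVecE (y1 t (xl ℓ t) - y1 t (xt t)) (ul ℓ t), w t⟫ : ℝ)) μ :=
    fun ℓ => integrable_inner_mulVec (hΔm ℓ) (hul ℓ).1 hw.1 (hΔbd ℓ) (hulM ℓ) hκ1w2
  have i2 : ∀ ℓ, Integrable
      (fun t => (⟪mulVecE (y1 t (xt t)) (ul ℓ t), w t⟫ : ℝ)) μ :=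
    fun ℓ => integrable_inner_mulVec hcomp1' (hul ℓ).1 hw.1 hy1bd' (hulM ℓ) hκ1w
  have i2' : ∀ ℓ, Integrable (fun t => (⟪ul ℓ t, v t⟫ : ℝ)) μ := by
    intro ℓ
    refine (i2 ℓ).congr (Eventually.of_forall fun t => ?_)
    exact inner_mulVecE _ _ _
  have i3 : ∀ ℓ, Integrable (fun t => (⟪y2 t (xl ℓ t), w t⟫ : ℝ)) μ := by
    intro ℓ
    refine Integrable.mono' hκ2w (inner_aesm (hcomp2 ℓ) hw.1) ?_
    filter_upwards [hy2bd] with t hb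
    calc ‖(⟪y2 t (xl ℓ t), w t⟫ : ℝ)‖ ≤ ‖y2 t (xl ℓ t)‖ * ‖w t‖ := norm_inner_le_norm _ _
      _ ≤ κ2 t * ‖w t‖ := mul_le_mul_of_nonneg_right (hb _ (hxlmem ℓ t)) (norm_nonneg _)
  have i3' : Integrable (fun t => (⟪y2 t (xt t), w t⟫ : ℝ)) μ := by
    refine Integrable.mono' hκ2w (inner_aesm hcomp2' hw.1) ?_
    filter_upwards [hy2bd] with t hb
    calc ‖(⟪y2 t (xt t), w t⟫ : ℝ)‖ ≤ ‖y2 t (xt t)‖ * ‖w t‖ := norm_inner_le_norm _ _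
      _ ≤ κ2 t * ‖w t‖ := mul_le_mul_of_nonneg_right (hb _ (hxtmem t)) (norm_nonneg _)
  have i2t : Integrable (fun t => (⟪mulVecE (y1 t (xt t)) (ut t), w t⟫ : ℝ)) μ :=
    integrable_inner_mulVec hcomp1' hut.1 hw.1 hy1bd' hutM hκ1w
  have i2t' : Integrable (fun t => (⟪ut t, v t⟫ : ℝ)) μ :=
    i2t.congr (Eventually.of_forall fun t => inner_mulVecE _ _ _)
  -- T1 : the commutator term tends to 0
  have hallM : ∀ᵐ t ∂μ, ∀ ℓ, ‖ul ℓ t‖ ≤ M := (ae_all_iff).mpr hulM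
  have T1 : Tendsto
      (fun ℓ => ∫ t, (⟪mulVecE (y1 t (xl ℓ t) - y1 t (xt t)) (ul ℓ t), w t⟫ : ℝ) ∂μ)
      atTop (𝓝 0) := by
    have h := tendsto_integral_of_dominated_convergence (μ := μ)
      (F := fun ℓ t => (⟪mulVecE (y1 t (xl ℓ t) - y1 t (xt t)) (ul ℓ t), w t⟫ : ℝ))
      (f := fun _ => (0:ℝ)) (bound := fun t => (2 * M) * (κ1 t * ‖w t‖))
      (fun ℓ => inner_aesm
        (continuous_mulVecE.comp_aestronglyMeasurable ((hΔm ℓ).prodMk (hul ℓ).1)) hw.1)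
      (hκ1w.const_mul (2 * M))
      (fun ℓ => by
        filter_upwards [hΔbd ℓ, hulM ℓ] with t h1 h2
        have h0 : (0:ℝ) ≤ 2 * κ1 t := (frobNorm_nonneg _).trans h1
        have h3 : ‖mulVecE (y1 t (xl ℓ t) - y1 t (xt t)) (ul ℓ t)‖ ≤ (2 * κ1 t) * M :=
          (norm_mulVecE_le _ _).trans (mul_le_mul h1 h2 (norm_nonneg _) h0)
        calc ‖(⟪mulVecE (y1 t (xl ℓ t) - y1 t (xt t)) (ul ℓ t), w t⟫ : ℝ)‖
            ≤ ‖mulVecE (y1 t (xl ℓ t) - y1 t (xt t)) (ul ℓ t)‖ * ‖w t‖ :=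
              norm_inner_le_norm _ _
          _ ≤ ((2 * κ1 t) * M) * ‖w t‖ := mul_le_mul_of_nonneg_right h3 (norm_nonneg _)
          _ = (2 * M) * (κ1 t * ‖w t‖) := by ring)
      (by
        filter_upwards [hy1cont, hxconv, hallM] with t hc hx hMall
        have hAten : Tendsto (fun ℓ => y1 t (xl ℓ t)) atTop (𝓝 (y1 t (xt t))) := by
          have hwithin : Tendsto (fun ℓ => xl ℓ t) atTop (𝓝[closedBall x0 ρ] (xt t)) :=
            tendsto_nhdsWithin_iff.mpr ⟨hx, Eventually.of_forall fun ℓ => hxlmem ℓ t⟩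
          exact ((hc (xt t) (hxtmem t)).tendsto).comp hwithin
        have hΔten : Tendsto (fun ℓ => y1 t (xl ℓ t) - y1 t (xt t)) atTop (𝓝 0) := by
          have := hAten.sub (tendsto_const_nhds (x := y1 t (xt t)))
          simpa using this
        have hfr : Tendsto (fun ℓ => frobNorm (y1 t (xl ℓ t) - y1 t (xt t))) atTop (𝓝 0) := by
          have := (continuous_frobNorm.tendsto (0 : Matrix (Fin ny) (Fin nu) ℝ)).comp hΔten
          simpa [frobNorm_zero, Function.comp_def] using this
        have hbd : ∀ ℓ, ‖(⟪mulVecE (y1 t (xl ℓ t) - y1 t (xt t)) (ul ℓ t), w t⟫ : ℝ)‖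
            ≤ frobNorm (y1 t (xl ℓ t) - y1 t (xt t)) * (M * ‖w t‖) := by
          intro ℓ
          have h3 := norm_mulVecE_le (y1 t (xl ℓ t) - y1 t (xt t)) (ul ℓ t)
          have h4 : ‖ul ℓ t‖ * ‖w t‖ ≤ M * ‖w t‖ :=
            mul_le_mul_of_nonneg_right (hMall ℓ) (norm_nonneg _)
          calc ‖(⟪mulVecE (y1 t (xl ℓ t) - y1 t (xt t)) (ul ℓ t), w t⟫ : ℝ)‖
              ≤ ‖mulVecE (y1 t (xl ℓ t) - y1 t (xt t)) (ul ℓ t)‖ * ‖w t‖ :=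
                norm_inner_le_norm _ _
            _ ≤ (frobNorm (y1 t (xl ℓ t) - y1 t (xt t)) * ‖ul ℓ t‖) * ‖w t‖ :=
                mul_le_mul_of_nonneg_right h3 (norm_nonneg _)
            _ = frobNorm (y1 t (xl ℓ t) - y1 t (xt t)) * (‖ul ℓ t‖ * ‖w t‖) := by ring
            _ ≤ frobNorm (y1 t (xl ℓ t) - y1 t (xt t)) * (M * ‖w t‖) :=
                mul_le_mul_of_nonneg_left h4 (frobNorm_nonneg _)
        have htd : Tendsto
            (fun ℓ => frobNorm (y1 t (xl ℓ t) - y1 t (xt t)) * (M * ‖w t‖)) atTop (𝓝 0) := by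
          have := hfr.mul_const (M * ‖w t‖)
          simpa using this
        exact squeeze_zero_norm hbd htd)
    simpa using h
  -- T3
  have T3 : Tendsto (fun ℓ => ∫ t, (⟪y2 t (xl ℓ t), w t⟫ : ℝ) ∂μ) atTop
      (𝓝 (∫ t, (⟪y2 t (xt t), w t⟫ : ℝ) ∂μ)) := by
    apply tendsto_integral_of_dominated_convergence (bound := fun t => κ2 t * ‖w t‖)
      (fun ℓ => inner_aesm (hcomp2 ℓ) hw.1) hκ2w
    · intro ℓ
      filter_upwards [hy2bd] with t hb
      calc ‖(⟪y2 t (xl ℓ t), w t⟫ : ℝ)‖ ≤ ‖y2 t (xl ℓ t)‖ * ‖w t‖ := norm_inner_le_norm _ _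
        _ ≤ κ2 t * ‖w t‖ := mul_le_mul_of_nonneg_right (hb _ (hxlmem ℓ t)) (norm_nonneg _)
    · filter_upwards [hy2cont, hxconv] with t hc hx
      have hy2ten : Tendsto (fun ℓ => y2 t (xl ℓ t)) atTop (𝓝 (y2 t (xt t))) := by
        have hwithin : Tendsto (fun ℓ => xl ℓ t) atTop (𝓝[closedBall x0 ρ] (xt t)) :=
          tendsto_nhdsWithin_iff.mpr ⟨hx, Eventually.of_forall fun ℓ => hxlmem ℓ t⟩
        exact ((hc (xt t) (hxtmem t)).tendsto).comp hwithin
      exact hy2ten.inner tendsto_const_nhds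
  -- pointwise decomposition
  have hident : ∀ ℓ (t : ℝ),
      (⟪mulVecE (y1 t (xl ℓ t)) (ul ℓ t) + y2 t (xl ℓ t), w t⟫ : ℝ)
      = (⟪mulVecE (y1 t (xl ℓ t) - y1 t (xt t)) (ul ℓ t), w t⟫ : ℝ)
        + (⟪ul ℓ t, v t⟫ : ℝ) + (⟪y2 t (xl ℓ t), w t⟫ : ℝ) := by
    intro ℓ t
    rw [inner_add_left]
    congr 1
    have hsplit : mulVecE (y1 t (xl ℓ t)) (ul ℓ t)
        = mulVecE (y1 t (xl ℓ t) - y1 t (xt t)) (ul ℓ t)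
          + mulVecE (y1 t (xt t)) (ul ℓ t) := by
      ext j
      simp only [PiLp.add_apply, mulVecE_apply, Matrix.sub_apply]
      rw [← Finset.sum_add_distrib]
      refine Finset.sum_congr rfl fun k _ => by ring
    rw [hsplit, inner_add_left]
    congr 1
    exact inner_mulVecE _ _ _
  have hidentR : ∀ t : ℝ,
      (⟪mulVecE (y1 t (xt t)) (ut t) + y2 t (xt t), w t⟫ : ℝ)
      = (⟪ut t, v t⟫ : ℝ) + (⟪y2 t (xt t), w t⟫ : ℝ) := by
    intro t
    rw [inner_add_left, inner_mulVecE]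
  have hsplitL : ∀ ℓ, ∫ t, (⟪mulVecE (y1 t (xl ℓ t)) (ul ℓ t) + y2 t (xl ℓ t), w t⟫ : ℝ) ∂μ
      = (∫ t, (⟪mulVecE (y1 t (xl ℓ t) - y1 t (xt t)) (ul ℓ t), w t⟫ : ℝ) ∂μ)
        + (∫ t, (⟪ul ℓ t, v t⟫ : ℝ) ∂μ) + ∫ t, (⟪y2 t (xl ℓ t), w t⟫ : ℝ) ∂μ := by
    intro ℓ
    have e12 : Integrable (fun t => (⟪mulVecE (y1 t (xl ℓ t) - y1 t (xt t)) (ul ℓ t), w t⟫ : ℝ)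
        + (⟪ul ℓ t, v t⟫ : ℝ)) μ := (i1 ℓ).add (i2' ℓ)
    calc ∫ t, (⟪mulVecE (y1 t (xl ℓ t)) (ul ℓ t) + y2 t (xl ℓ t), w t⟫ : ℝ) ∂μ
        = ∫ t, ((⟪mulVecE (y1 t (xl ℓ t) - y1 t (xt t)) (ul ℓ t), w t⟫ : ℝ)
            + (⟪ul ℓ t, v t⟫ : ℝ)) + (⟪y2 t (xl ℓ t), w t⟫ : ℝ) ∂μ :=
          integral_congr_ae (Eventually.of_forall fun t => hident ℓ t)
      _ = (∫ t, ((⟪mulVecE (y1 t (xl ℓ t) - y1 t (xt t)) (ul ℓ t), w t⟫ : ℝ)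
            + (⟪ul ℓ t, v t⟫ : ℝ)) ∂μ) + ∫ t, (⟪y2 t (xl ℓ t), w t⟫ : ℝ) ∂μ :=
          integral_add e12 (i3 ℓ)
      _ = _ := by rw [integral_add (i1 ℓ) (i2' ℓ)]
  have hsplitR : ∫ t, (⟪mulVecE (y1 t (xt t)) (ut t) + y2 t (xt t), w t⟫ : ℝ) ∂μ
      = (∫ t, (⟪ut t, v t⟫ : ℝ) ∂μ) + ∫ t, (⟪y2 t (xt t), w t⟫ : ℝ) ∂μ := by
    calc ∫ t, (⟪mulVecE (y1 t (xt t)) (ut t) + y2 t (xt t), w t⟫ : ℝ) ∂μ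
        = ∫ t, (⟪ut t, v t⟫ : ℝ) + (⟪y2 t (xt t), w t⟫ : ℝ) ∂μ :=
          integral_congr_ae (Eventually.of_forall fun t => hidentR t)
      _ = _ := integral_add i2t' i3'
  have final := (T1.add T2).add T3
  rw [zero_add] at final
  refine Tendsto.congr (fun ℓ => (hsplitL ℓ).symm) ?_
  rw [hsplitR]
  exact final
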